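/- Carrier Theorem: Let C : F → G be a carrier where F is a closed, locally finite, locally finite dimensional cover of a space X, and G is a collection of subsets of a space Y such that every nonempty intersection of a subcollection of G is an absolute extensor for X. Then every continuous map f defined on a closed subset A of X with f(F ∩ A) ⊆ C(F) for all F in F extends to a continuous map g : X → Y with g(F) ⊆ C(F) for all F in F. -/

import Mathlib

open Set Function

/-- `C` is a carrier on the cover `F`. -/
def IsCarrierOn {X Y : Type*} (F : Set (Set X)) (C : Set X → Set Y) : Prop :=
  ∀ 𝒜 ⊆ F, 𝒜.Nonempty → (⋂₀ 𝒜).Nonempty → (⋂ A ∈ 𝒜, C A).Nonempty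

/-- `E ⊆ Z` is an absolute extensor for the space `W`. -/
def IsAE {Z : Type*} [TopologicalSpace Z] (E : Set Z)
    (W : Type*) [TopologicalSpace W] : Prop :=
  ∀ A : Set W, IsClosed A → ∀ f : W → Z, ContinuousOn f A → MapsTo f A E →
    ∃ g : W → Z, Continuous g ∧ MapsTo g univ E ∧ EqOn g f A

/-- The cover `F` is locally finite dimensional (its nerve is such). -/
def LocFinDim {X : Type*} (F : Set (Set X)) : Prop :=
  ∀ A ∈ F, ∃ n : ℕ, ∀ B : Set (Set X), B ⊆ F → A ∈ B → (⋂₀ B).Nonempty →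
    B.Finite → B.ncard ≤ n

/-- The "star" of a point: the members of `F` containing it. -/
def carSt {X : Type*} (F : Set (Set X)) (y : X) : Set (Set X) := {B | B ∈ F ∧ y ∈ B}

/-- Families indexing a nonempty "simplex" of the nerve. -/
def carValid {X : Type*} (F : Set (Set X)) (𝒜 : Set (Set X)) : Prop :=
  𝒜 ⊆ F ∧ 𝒜.Finite ∧ 𝒜.Nonempty ∧ (⋂₀ 𝒜).Nonempty

/-- A bound on the cardinality of valid families containing `𝒜`. -/
noncomputable def carN {X : Type*} (F 𝒜 : Set (Set X)) : ℕ :=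
  sInf {n | ∀ 𝒜', carValid F 𝒜' → 𝒜 ⊆ 𝒜' → 𝒜'.ncard ≤ n}

/-- The "codimension" measure of a family. -/
noncomputable def carM {X : Type*} (F 𝒜 : Set (Set X)) : ℕ := carN F 𝒜 - 𝒜.ncard

/-- The set where the extension corresponding to `𝒜` is already prescribed. -/
def carD {X : Type*} (F : Set (Set X)) (A : Set X) (𝒜 : Set (Set X)) : Set X :=
  (⋂₀ 𝒜 ∩ A) ∪ {y | 𝒜 ⊂ carSt F y}

open Classical in
/-- The prescribed values on `carD`. -/
noncomputable def carPhi {X Y : Type*} (F : Set (Set X)) (f : X → Y)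
    (h : Set (Set X) → X → Y) (𝒜 : Set (Set X)) : X → Y :=
  fun y => if 𝒜 ⊂ carSt F y then h (carSt F y) y else f y

open Classical in
/-- One step of the recursive construction. -/
noncomputable def carExt {X Y : Type*} [TopologicalSpace X] [TopologicalSpace Y]
    (F : Set (Set X)) (C : Set X → Set Y) (A : Set X) (f : X → Y)
    (h : Set (Set X) → X → Y) (d : ℕ) (𝒜 : Set (Set X)) : X → Y :=
  if carM F 𝒜 < d then h 𝒜
  else if hg : ∃ g : X → Y, Continuous g ∧ MapsTo g univ (⋂₀ (C '' 𝒜)) ∧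
      EqOn g (carPhi F f h 𝒜) (carD F A 𝒜) then hg.choose
  else h 𝒜

/-- The recursive construction. -/
noncomputable def carPsi {X Y : Type*} [TopologicalSpace X] [TopologicalSpace Y]
    (F : Set (Set X)) (C : Set X → Set Y) (A : Set X) (f : X → Y) :
    ℕ → Set (Set X) → X → Y
  | 0 => fun _ => f
  | d + 1 => carExt F C A f (carPsi F C A f d) d

/-- Carrier Theorem: if `C : F → G` is a carrier, `F` a closed locally finite locally
finite dimensional cover of `X`, and every nonempty intersection of a subcollection of
`G` is an absolute extensor for `X`, then every continuous map `f` on a closed set `A`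
carried by `C` extends to a continuous map `g` of `X` carried by `C`. -/
theorem stmt6 {X Y : Type*} [TopologicalSpace X] [TopologicalSpace Y]
    (F : Set (Set X)) (G : Set (Set Y)) (C : Set X → Set Y)
    (hcov : ⋃₀ F = univ) (hclosed : ∀ A ∈ F, IsClosed A)
    (hlf : LocallyFinite (fun A : F => (A : Set X)))
    (hlfd : LocFinDim F)
    (hCG : ∀ A ∈ F, C A ∈ G) (hcarrier : IsCarrierOn F C)
    (hAE : ∀ ℬ ⊆ G, ℬ.Nonempty → (⋂₀ ℬ).Nonempty → IsAE (⋂₀ ℬ) X)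
    (A : Set X) (hA : IsClosed A) (f : X → Y) (hf : ContinuousOn f A)
    (hcar : ∀ F' ∈ F, f '' (F' ∩ A) ⊆ C F') :
    ∃ g : X → Y, Continuous g ∧ EqOn g f A ∧ ∀ F' ∈ F, g '' F' ⊆ C F' := by
  classical
  -- Basic facts about stars
  have hStsub : ∀ y : X, carSt F y ⊆ F := fun y B hB => hB.1
  have hySt : ∀ y : X, y ∈ ⋂₀ carSt F y := fun y B hB => hB.2
  have hStfin : ∀ y : X, (carSt F y).Finite := by
    intro y
    obtain ⟨U, hU, hfin⟩ := hlf y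
    refine (hfin.image (fun A : F => (A : Set X))).subset ?_
    intro B hB
    exact ⟨⟨B, hB.1⟩, ⟨y, hB.2, mem_of_mem_nhds hU⟩, rfl⟩
  have hStne : ∀ y : X, (carSt F y).Nonempty := by
    intro y
    have hy : y ∈ ⋃₀ F := hcov ▸ mem_univ y
    obtain ⟨B, hBF, hyB⟩ := hy
    exact ⟨B, hBF, hyB⟩
  have hValidSt : ∀ y : X, carValid F (carSt F y) :=
    fun y => ⟨hStsub y, hStfin y, hStne y, ⟨y, hySt y⟩⟩
  have hStmem : ∀ (y : X) (𝒜 : Set (Set X)), 𝒜 ⊆ F → (y ∈ ⋂₀ 𝒜 ↔ 𝒜 ⊆ carSt F y) := by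
    intro y 𝒜 h𝒜
    constructor
    · intro hy B hB
      exact ⟨h𝒜 hB, hy B hB⟩
    · intro hs B hB
      exact (hs hB).2
  -- facts about the measure
  have hNset : ∀ 𝒜, carValid F 𝒜 →
      {n | ∀ 𝒜', carValid F 𝒜' → 𝒜 ⊆ 𝒜' → 𝒜'.ncard ≤ n}.Nonempty := by
    intro 𝒜 h𝒜
    obtain ⟨B, hB⟩ := h𝒜.2.2.1
    obtain ⟨n, hn⟩ := hlfd B (h𝒜.1 hB)
    exact ⟨n, fun 𝒜' h𝒜' hsub => hn 𝒜' h𝒜'.1 (hsub hB) h𝒜'.2.2.2 h𝒜'.2.1⟩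
  have hNspec : ∀ 𝒜, carValid F 𝒜 → ∀ 𝒜', carValid F 𝒜' → 𝒜 ⊆ 𝒜' →
      𝒜'.ncard ≤ carN F 𝒜 := fun 𝒜 h => Nat.sInf_mem (hNset 𝒜 h)
  have hmlt : ∀ 𝒜 𝒜', carValid F 𝒜 → carValid F 𝒜' → 𝒜 ⊂ 𝒜' → carM F 𝒜' < carM F 𝒜 := by
    intro 𝒜 𝒜' h h' hss
    have h1 : 𝒜'.ncard ≤ carN F 𝒜 := hNspec 𝒜 h 𝒜' h' hss.subset
    have h2 : 𝒜'.ncard ≤ carN F 𝒜' := hNspec 𝒜' h' 𝒜' h' subset_rfl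
    have h3 : carN F 𝒜' ≤ carN F 𝒜 :=
      Nat.sInf_le (fun 𝒜'' h'' hsub => hNspec 𝒜 h 𝒜'' h'' (hss.subset.trans hsub))
    have h4 : 𝒜.ncard < 𝒜'.ncard := Set.ncard_lt_ncard hss h'.2.1
    unfold carM
    omega
  -- closedness facts
  have hsUclosed : ∀ S : Set (Set X), S ⊆ F → IsClosed (⋃₀ S) := by
    intro S hS
    rw [sUnion_eq_iUnion]
    exact (hlf.comp_injective (inclusion_injective hS)).isClosed_iUnion
      (fun B => hclosed _ (hS B.2))
  have hKclosed : ∀ 𝒜 : Set (Set X), 𝒜 ⊆ F → IsClosed (⋂₀ 𝒜) :=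
    fun 𝒜 h => isClosed_sInter (fun B hB => hclosed B (h hB))
  have hLeq : ∀ 𝒜, carValid F 𝒜 → {y | 𝒜 ⊂ carSt F y} = ⋂₀ 𝒜 ∩ ⋃₀ (F \ 𝒜) := by
    intro 𝒜 h𝒜
    ext y
    simp only [mem_setOf_eq, mem_inter_iff, mem_sUnion]
    constructor
    · intro hss
      refine ⟨(hStmem y 𝒜 h𝒜.1).2 hss.subset, ?_⟩
      obtain ⟨B, hB, hBn⟩ := exists_of_ssubset hss
      exact ⟨B, ⟨hB.1, hBn⟩, hB.2⟩
    · rintro ⟨h1, B, ⟨hBF, hBn⟩, hyB⟩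
      rw [ssubset_def]
      exact ⟨(hStmem y 𝒜 h𝒜.1).1 h1, fun hrev => hBn (hrev ⟨hBF, hyB⟩)⟩
  have hDclosed : ∀ 𝒜, carValid F 𝒜 → IsClosed (carD F A 𝒜) := by
    intro 𝒜 h𝒜
    unfold carD
    rw [hLeq 𝒜 h𝒜]
    exact ((hKclosed 𝒜 h𝒜.1).inter hA).union
      ((hKclosed 𝒜 h𝒜.1).inter (hsUclosed _ diff_subset))
  -- target facts
  have hTne : ∀ 𝒜, carValid F 𝒜 → (⋂₀ (C '' 𝒜)).Nonempty := by
    intro 𝒜 h𝒜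
    rw [sInter_image]
    exact hcarrier 𝒜 h𝒜.1 h𝒜.2.2.1 h𝒜.2.2.2
  have hTsub : ∀ (𝒜 : Set (Set X)) (B : Set X), B ∈ 𝒜 → ⋂₀ (C '' 𝒜) ⊆ C B :=
    fun 𝒜 B hB => sInter_subset_of_mem (mem_image_of_mem C hB)
  have hTmono : ∀ 𝒜 𝒜' : Set (Set X), 𝒜 ⊆ 𝒜' → ⋂₀ (C '' 𝒜') ⊆ ⋂₀ (C '' 𝒜) :=
    fun _ _ h => sInter_subset_sInter (image_mono (f := C) h)
  -- monotonicity of the recursion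
  have hpsi_succ : ∀ (d : ℕ) 𝒜, carM F 𝒜 < d →
      carPsi F C A f (d + 1) 𝒜 = carPsi F C A f d 𝒜 := by
    intro d 𝒜 h
    show carExt F C A f (carPsi F C A f d) d 𝒜 = _
    rw [carExt, if_pos h]
  have hmono : ∀ (d' d : ℕ) (𝒜 : Set (Set X)), d ≤ d' → carM F 𝒜 < d →
      carPsi F C A f d' 𝒜 = carPsi F C A f d 𝒜 := by
    intro d'
    induction d' with
    | zero =>
      intro d 𝒜 hdd _
      have : d = 0 := Nat.le_zero.mp hdd
      rw [this]
    | succ d' ih =>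
      intro d 𝒜 hdd hm
      by_cases hc : d = d' + 1
      · rw [hc]
      · have hle : d ≤ d' := by omega
        rw [hpsi_succ d' 𝒜 (lt_of_lt_of_le hm hle), ih d 𝒜 hle hm]
  -- the main inductive construction
  have hspec : ∀ (d : ℕ) (𝒜 : Set (Set X)), carValid F 𝒜 → carM F 𝒜 < d →
      Continuous (carPsi F C A f d 𝒜) ∧
      MapsTo (carPsi F C A f d 𝒜) univ (⋂₀ (C '' 𝒜)) ∧
      EqOn (carPsi F C A f d 𝒜) f (⋂₀ 𝒜 ∩ A) ∧
      ∀ 𝒜', carValid F 𝒜' → 𝒜 ⊆ 𝒜' →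
        EqOn (carPsi F C A f d 𝒜) (carPsi F C A f d 𝒜') (⋂₀ 𝒜') := by
    intro d
    induction d with
    | zero =>
      intro 𝒜 _ hm
      omega
    | succ d IH =>
      intro 𝒜 h𝒜 hm
      by_cases hlt : carM F 𝒜 < d
      · rw [hpsi_succ d 𝒜 hlt]
        obtain ⟨c1, c2, c3, c4⟩ := IH 𝒜 h𝒜 hlt
        refine ⟨c1, c2, c3, ?_⟩
        intro 𝒜' h𝒜' hsub
        rcases hsub.ssubset_or_eq with hss | heq
        · have hm' : carM F 𝒜' < d := lt_trans (hmlt 𝒜 𝒜' h𝒜 h𝒜' hss) hlt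
          rw [hpsi_succ d 𝒜' hm']
          exact c4 𝒜' h𝒜' hsub
        · rw [← heq, hpsi_succ d 𝒜 hlt]
          exact fun _ _ => rfl
      · -- the new case : carM F 𝒜 = d
        have hsup : ∀ 𝒜', carValid F 𝒜' → 𝒜 ⊂ 𝒜' → carM F 𝒜' < d := by
          intro 𝒜' h' hss
          have := hmlt 𝒜 𝒜' h𝒜 h' hss
          omega
        -- the prescribed map agrees with previously constructed maps
        have hphi1 : ∀ 𝒜', carValid F 𝒜' → 𝒜 ⊂ 𝒜' →
            EqOn (carPhi F f (carPsi F C A f d) 𝒜) (carPsi F C A f d 𝒜') (⋂₀ 𝒜') := by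
          intro 𝒜' h𝒜' hss y hy
          have hsub' : 𝒜' ⊆ carSt F y := (hStmem y 𝒜' h𝒜'.1).1 hy
          have hssSt : 𝒜 ⊂ carSt F y := hss.trans_subset hsub'
          show (if 𝒜 ⊂ carSt F y then carPsi F C A f d (carSt F y) y else f y) = _
          rw [if_pos hssSt]
          exact ((IH 𝒜' h𝒜' (hsup 𝒜' h𝒜' hss)).2.2.2 (carSt F y) (hValidSt y) hsub'
            (hySt y)).symm
        have hphi2 : EqOn (carPhi F f (carPsi F C A f d) 𝒜) f (⋂₀ 𝒜 ∩ A) := by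
          intro y hy
          show (if 𝒜 ⊂ carSt F y then carPsi F C A f d (carSt F y) y else f y) = f y
          by_cases hss : 𝒜 ⊂ carSt F y
          · rw [if_pos hss]
            exact (IH (carSt F y) (hValidSt y) (hsup _ (hValidSt y) hss)).2.2.1
              ⟨hySt y, hy.2⟩
          · rw [if_neg hss]
        -- continuity of the prescribed map on `carD`
        have hcont : ContinuousOn (carPhi F f (carPsi F C A f d) 𝒜) (carD F A 𝒜) := by
          set s : Option ↥(F \ 𝒜) → Set X :=
            fun o => Option.elim o (⋂₀ 𝒜 ∩ A) (fun B => ⋂₀ 𝒜 ∩ ↑B) with hs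
          have hDeq : carD F A 𝒜 = ⋃ o, s o := by
            unfold carD
            rw [hLeq 𝒜 h𝒜, iUnion_option, sUnion_eq_iUnion, inter_iUnion]
            rfl
          have hlfs : LocallyFinite s := by
            intro x
            obtain ⟨U, hU, hfin⟩ := hlf x
            refine ⟨U, hU, ?_⟩
            have hsubfin : {B : ↥(F \ 𝒜) | ((B : Set X) ∩ U).Nonempty}.Finite := by
              have hpre : {B : ↥(F \ 𝒜) | ((B : Set X) ∩ U).Nonempty} =
                  Set.inclusion (diff_subset : F \ 𝒜 ⊆ F) ⁻¹'
                    {A : ↥F | ((A : Set X) ∩ U).Nonempty} := rfl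
              rw [hpre]
              exact Set.Finite.preimage ((Set.inclusion_injective diff_subset).injOn) hfin
            refine Set.Finite.subset ((hsubfin.image some).insert none) ?_
            rintro (_ | B) ho
            · exact mem_insert _ _
            · obtain ⟨z, hz, hzU⟩ := ho
              exact mem_insert_of_mem _ ⟨B, ⟨z, hz.2, hzU⟩, rfl⟩
          rw [hDeq]
          refine hlfs.continuousOn_iUnion ?_ ?_
          · rintro (_ | B)
            · exact (hKclosed 𝒜 h𝒜.1).inter hA
            · exact (hKclosed 𝒜 h𝒜.1).inter (hclosed _ B.2.1)
          · rintro (_ | B)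
            · exact (hf.mono inter_subset_right).congr hphi2
            · show ContinuousOn _ (⋂₀ 𝒜 ∩ ↑B)
              have hKB : ⋂₀ 𝒜 ∩ ↑B = ⋂₀ insert (↑B : Set X) 𝒜 := by
                rw [sInter_insert, inter_comm]
              rcases eq_empty_or_nonempty (⋂₀ 𝒜 ∩ ↑B) with hemp | hne
              · rw [hemp]
                exact continuousOn_empty _
              · have h𝒜' : carValid F (insert (↑B : Set X) 𝒜) :=
                  ⟨insert_subset B.2.1 h𝒜.1, h𝒜.2.1.insert _, ⟨↑B, mem_insert _ _⟩,
                    hKB ▸ hne⟩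
                have hss : 𝒜 ⊂ insert (↑B : Set X) 𝒜 := ssubset_insert B.2.2
                rw [hKB]
                exact ((IH _ h𝒜' (hsup _ h𝒜' hss)).1.continuousOn).congr
                  (hphi1 _ h𝒜' hss)
        -- the prescribed map maps into the target
        have hmaps : MapsTo (carPhi F f (carPsi F C A f d) 𝒜) (carD F A 𝒜)
            (⋂₀ (C '' 𝒜)) := by
          rintro y (hy | hy)
          · rw [hphi2 hy]
            rintro E ⟨B, hB, rfl⟩
            exact hcar B (h𝒜.1 hB) ⟨y, ⟨hy.1 B hB, hy.2⟩, rfl⟩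
          · have hy' : 𝒜 ⊂ carSt F y := hy
            show (if 𝒜 ⊂ carSt F y then carPsi F C A f d (carSt F y) y else f y) ∈ _
            rw [if_pos hy']
            exact hTmono 𝒜 (carSt F y) hy'.subset
              ((IH (carSt F y) (hValidSt y) (hsup _ (hValidSt y) hy')).2.1 (mem_univ y))
        -- existence of the extension, via the absolute extensor property
        have hEX : ∃ g : X → Y, Continuous g ∧ MapsTo g univ (⋂₀ (C '' 𝒜)) ∧
            EqOn g (carPhi F f (carPsi F C A f d) 𝒜) (carD F A 𝒜) := by
          refine hAE (C '' 𝒜) ?_ (h𝒜.2.2.1.image C) (hTne 𝒜 h𝒜) (carD F A 𝒜)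
            (hDclosed 𝒜 h𝒜) _ hcont hmaps
          rintro E ⟨B, hB, rfl⟩
          exact hCG B (h𝒜.1 hB)
        have e : carPsi F C A f (d + 1) 𝒜 = hEX.choose := by
          show carExt F C A f (carPsi F C A f d) d 𝒜 = _
          rw [carExt, if_neg hlt, dif_pos hEX]
        obtain ⟨g1, g2, g3⟩ := hEX.choose_spec
        rw [e]
        refine ⟨g1, g2, ?_, ?_⟩
        · exact fun y hy => (g3 (Or.inl hy)).trans (hphi2 hy)
        · intro 𝒜' h𝒜' hsub
          rcases hsub.ssubset_or_eq with hss | heq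
          · intro y hy
            have hyD : y ∈ carD F A 𝒜 :=
              Or.inr (hss.trans_subset ((hStmem y 𝒜' h𝒜'.1).1 hy))
            rw [hpsi_succ d 𝒜' (hsup 𝒜' h𝒜' hss)]
            exact (g3 hyD).trans (hphi1 𝒜' h𝒜' hss hy)
          · rw [← heq, e]
            exact fun _ _ => rfl
  -- assemble the global map
  refine ⟨fun y => carPsi F C A f (carM F (carSt F y) + 1) (carSt F y) y, ?_, ?_, ?_⟩
  · -- continuity, via the locally finite closed cover `F`
    have hcovU : ⋃ B : F, (B : Set X) = univ := by
      rw [← sUnion_eq_iUnion, hcov]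
    refine hlf.continuous hcovU (fun B => hclosed _ B.2) ?_
    intro B
    rcases eq_empty_or_nonempty (B : Set X) with hemp | hne
    · rw [hemp]
      exact continuousOn_empty _
    · have hBval : carValid F ({(B : Set X)} : Set (Set X)) :=
        ⟨singleton_subset_iff.mpr B.2, finite_singleton _, singleton_nonempty _, by
          rwa [sInter_singleton]⟩
      have heq : EqOn (fun y => carPsi F C A f (carM F (carSt F y) + 1) (carSt F y) y)
          (carPsi F C A f (carM F ({(B : Set X)} : Set (Set X)) + 1)
            ({(B : Set X)} : Set (Set X))) (B : Set X) := by
        intro y hy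
        have hsubSt : ({(B : Set X)} : Set (Set X)) ⊆ carSt F y :=
          singleton_subset_iff.mpr ⟨B.2, hy⟩
        set d := max (carM F ({(B : Set X)} : Set (Set X))) (carM F (carSt F y)) + 1
          with hd
        have h1 : carPsi F C A f d ({(B : Set X)} : Set (Set X)) =
            carPsi F C A f (carM F ({(B : Set X)} : Set (Set X)) + 1)
              ({(B : Set X)} : Set (Set X)) :=
          hmono d _ _ (Nat.succ_le_succ (le_max_left _ _)) (Nat.lt_succ_self _)
        have h2 : carPsi F C A f d (carSt F y) =
            carPsi F C A f (carM F (carSt F y) + 1) (carSt F y) :=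
          hmono d _ _ (Nat.succ_le_succ (le_max_right _ _)) (Nat.lt_succ_self _)
        have h3 := (hspec d ({(B : Set X)} : Set (Set X)) hBval
          (Nat.lt_succ_of_le (le_max_left _ _))).2.2.2 (carSt F y) (hValidSt y)
          hsubSt (hySt y)
        show carPsi F C A f (carM F (carSt F y) + 1) (carSt F y) y = _
        rw [← h2, ← h1, ← h3]
      exact ContinuousOn.congr
        ((hspec (carM F ({(B : Set X)} : Set (Set X)) + 1) _ hBval
          (Nat.lt_succ_self _)).1.continuousOn) heq
  · -- agrees with f on A
    intro y hy
    exact (hspec (carM F (carSt F y) + 1) (carSt F y) (hValidSt y)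
      (Nat.lt_succ_self _)).2.2.1 ⟨hySt y, hy⟩
  · -- carried by C
    rintro B hB _ ⟨y, hyB, rfl⟩
    exact hTsub (carSt F y) B ⟨hB, hyB⟩
      ((hspec (carM F (carSt F y) + 1) (carSt F y) (hValidSt y)
        (Nat.lt_succ_self _)).2.1 (mem_univ y))
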